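/- Let (X_1,W_1),...,(X_n,W_n) be independent copies of a random vector (X,W) with joint probability density f_{X,W}, where X is a nonnegative continuous random variable. Let φ: [0,∞) → (0,1] be continuous decreasing with φ(0) = 1, and set W_i(t) = W_i·φ(t). Fix 1 ≤ r ≤ n. Then the operational reliability P_s(t) = P{X_{r:n} > t | min(W_{[r:n]}(t), ..., W_{[n:n]}(t)) > s} equals the ratio of integrals P_s(t) = [∫_t^∞ F_X(x)^{r-1} [P{X > x, W > s/φ(t)}]^{n-r} (∫_{s/φ(t)}^∞ f_{X,W}(x,y) dy) dx] / [∫_0^∞ F_X(x)^{r-1} [P{X > x, W > s}]^{n-r} (∫_s^∞ f_{X,W}(x,y) dy) dx], provided the denominator is positive. -/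

import Mathlib

open MeasureTheory ProbabilityTheory

open Classical in
/-- The `r`-th order statistic (r = 1, ..., n) of the values `v 0, ..., v (n-1)`:
the smallest `x` such that at least `r` of the values are `≤ x`. -/
noncomputable def orderStat {n : ℕ} (v : Fin n → ℝ) (r : ℕ) : ℝ :=
  sInf {x : ℝ | r ≤ (Finset.univ.filter (fun i => v i ≤ x)).card}

/-- `min(W_{[r:n]}, ..., W_{[n:n]})`: the minimum of the concomitants of the order
statistics of ranks `r, ..., n`. -/
noncomputable def concomMin {n : ℕ} (v w : Fin n → ℝ) (r : ℕ) : ℝ :=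
  sInf {y : ℝ | ∃ i, orderStat v r ≤ v i ∧ w i = y}

open Classical Finset in
lemma orderStat_isLeast {n : ℕ} (v : Fin n → ℝ) {r : ℕ} (hr : 1 ≤ r) (hrn : r ≤ n) :
    IsLeast {x : ℝ | r ≤ (Finset.univ.filter (fun i => v i ≤ x)).card} (orderStat v r) := by
  have hn : 0 < n := by omega
  have huniv : (Finset.univ : Finset (Fin n)).Nonempty := ⟨⟨0, hn⟩, by simp⟩
  set U : Set ℝ := {x : ℝ | r ≤ (Finset.univ.filter (fun i => v i ≤ x)).card} with hU
  have hmono : ∀ {x y : ℝ}, x ∈ U → x ≤ y → y ∈ U := by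
    intro x y hx hxy
    simp only [hU, Set.mem_setOf_eq] at hx ⊢
    refine hx.trans (Finset.card_le_card ?_)
    intro i hi
    simp only [Finset.mem_filter] at hi ⊢
    exact ⟨hi.1, hi.2.trans hxy⟩
  have hne : U.Nonempty := by
    refine ⟨univ.sup' huniv v, ?_⟩
    have h1 : (Finset.univ.filter (fun i => v i ≤ univ.sup' huniv v)) = univ :=
      Finset.filter_true_of_mem (fun i _ => Finset.le_sup' v (Finset.mem_univ i))
    simp only [hU, Set.mem_setOf_eq, h1, Finset.card_univ, Fintype.card_fin]
    exact hrn
  have hbdd : BddBelow U := by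
    refine ⟨univ.inf' huniv v, fun x hx => ?_⟩
    have hfne : (Finset.univ.filter (fun i => v i ≤ x)).Nonempty := by
      apply Finset.card_pos.mp
      have := hx
      simp only [hU, Set.mem_setOf_eq] at this
      omega
    obtain ⟨i, hi⟩ := hfne
    simp only [Finset.mem_filter] at hi
    exact le_trans (Finset.inf'_le v (Finset.mem_univ i)) hi.2
  have hlb : ∀ x ∈ U, orderStat v r ≤ x := fun x hx => csInf_le hbdd hx
  refine ⟨?_, hlb⟩
  set x0 := orderStat v r with hx0
  by_cases hTgt : (univ.filter (fun i => x0 < v i)) = ∅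
  · have h1 : (Finset.univ.filter (fun i => v i ≤ x0)) = univ := by
      apply Finset.filter_true_of_mem
      intro i _
      by_contra h
      have h2 : i ∈ univ.filter (fun i => x0 < v i) := by
        simp only [Finset.mem_filter]; exact ⟨Finset.mem_univ i, lt_of_not_ge h⟩
      simp [hTgt] at h2
    simp only [hU, Set.mem_setOf_eq, h1, Finset.card_univ, Fintype.card_fin]
    exact hrn
  · have hTne : (univ.filter (fun i => x0 < v i)).Nonempty :=
      Finset.nonempty_of_ne_empty hTgt
    have hinf : x0 < (univ.filter (fun i => x0 < v i)).inf' hTne v := by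
      rw [Finset.lt_inf'_iff]
      intro i hi; exact (Finset.mem_filter.mp hi).2
    obtain ⟨z, hz1, hz2⟩ := exists_between hinf
    have hzU : z ∈ U := by
      obtain ⟨u, huU, huz⟩ := exists_lt_of_csInf_lt hne (show sInf U < z from hz1)
      exact hmono huU huz.le
    have hsub : (univ.filter (fun i => v i ≤ z)) ⊆ (univ.filter (fun i => v i ≤ x0)) := by
      intro i hi
      simp only [Finset.mem_filter] at *
      refine ⟨hi.1, ?_⟩
      by_contra h
      have hiT : i ∈ univ.filter (fun i => x0 < v i) := by
        simp only [Finset.mem_filter]; exact ⟨Finset.mem_univ i, lt_of_not_ge h⟩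
      exact absurd (le_trans (Finset.inf'_le v hiT) hi.2) (not_le.mpr hz2)
    have : r ≤ (univ.filter (fun i => v i ≤ z)).card := hzU
    exact this.trans (Finset.card_le_card hsub)

open Classical Finset in
lemma orderStat_exists_eq {n : ℕ} (v : Fin n → ℝ) {r : ℕ} (hr : 1 ≤ r) (hrn : r ≤ n) :
    ∃ i, v i = orderStat v r := by
  obtain ⟨hmem, hlb⟩ := orderStat_isLeast v hr hrn
  set x0 := orderStat v r with hx0
  have hBne : (univ.filter (fun i => v i ≤ x0)).Nonempty := by
    apply Finset.card_pos.mp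
    simp only [Set.mem_setOf_eq] at hmem
    omega
  set b := (univ.filter (fun i => v i ≤ x0)).sup' hBne v with hb
  have hble : b ≤ x0 := by
    rw [hb, Finset.sup'_le_iff]
    intro i hi; exact (Finset.mem_filter.mp hi).2
  have hbU : r ≤ (univ.filter (fun i => v i ≤ b)).card := by
    refine hmem.trans (Finset.card_le_card ?_)
    intro i hi
    simp only [Finset.mem_filter] at *
    refine ⟨hi.1, ?_⟩
    exact Finset.le_sup' v (Finset.mem_filter.mpr hi)
  have hx0b : x0 = b := le_antisymm (hlb hbU) hble
  obtain ⟨i, _, hib⟩ := Finset.exists_mem_eq_sup' hBne v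
  refine ⟨i, ?_⟩
  rw [← hib]
  exact hb ▸ hx0b.symm

open Classical Finset in
lemma orderStat_le_iff {n : ℕ} (v : Fin n → ℝ) {r : ℕ} (hr : 1 ≤ r) (hrn : r ≤ n) (x : ℝ) :
    orderStat v r ≤ x ↔ r ≤ (Finset.univ.filter (fun i => v i ≤ x)).card := by
  obtain ⟨hmem, hlb⟩ := orderStat_isLeast v hr hrn
  constructor
  · intro h
    refine hmem.trans (Finset.card_le_card ?_)
    intro i hi
    simp only [Finset.mem_filter] at *
    exact ⟨hi.1, hi.2.trans h⟩
  · exact fun h => hlb h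

open Classical Finset in
lemma orderStat_eq_of_cell {n : ℕ} (v : Fin n → ℝ) {r : ℕ} (hr : 1 ≤ r) (hrn : r ≤ n)
    (j : Fin n) (S : Finset (Fin n)) (hjS : j ∉ S) (hcard : S.card = r - 1)
    (hlt : ∀ i ∈ S, v i < v j) (hgt : ∀ i, i ≠ j → i ∉ S → v j < v i) :
    orderStat v r = v j := by
  obtain ⟨hmem, hlb⟩ := orderStat_isLeast v hr hrn
  refine le_antisymm ?_ ?_
  · -- v j ∈ U
    refine hlb (show r ≤ (univ.filter (fun i => v i ≤ v j)).card from ?_)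
    have hsub : insert j S ⊆ univ.filter (fun i => v i ≤ v j) := by
      intro i hi
      rcases Finset.mem_insert.mp hi with rfl | hi
      · simp
      · simp only [Finset.mem_filter]
        exact ⟨Finset.mem_univ i, (hlt i hi).le⟩
    calc r = (insert j S).card := by rw [Finset.card_insert_of_notMem hjS, hcard]; omega
    _ ≤ _ := Finset.card_le_card hsub
  · by_contra h
    push_neg at h
    -- orderStat < v j; filter(≤ orderStat) ⊆ S
    have hsub : (univ.filter (fun i => v i ≤ orderStat v r)) ⊆ S := by
      intro i hi
      simp only [Finset.mem_filter] at hi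
      by_contra hiS
      have hij : i ≠ j := by
        rintro rfl
        exact absurd hi.2 (not_le.mpr h)
      exact absurd ((hgt i hij hiS).trans_le hi.2) (not_lt.mpr h.le)
    have := (Finset.card_le_card hsub).trans_eq hcard
    simp only [Set.mem_setOf_eq] at hmem
    omega

open Classical Finset in
lemma exists_cell_of_inj {n : ℕ} (v : Fin n → ℝ) {r : ℕ} (hr : 1 ≤ r) (hrn : r ≤ n)
    (hinj : Function.Injective v) :
    ∃ (j : Fin n) (S : Finset (Fin n)), j ∉ S ∧ S.card = r - 1 ∧ (∀ i ∈ S, v i < v j) ∧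
      (∀ i, i ≠ j → i ∉ S → v j < v i) ∧ v j = orderStat v r := by
  obtain ⟨j, hj⟩ := orderStat_exists_eq v hr hrn
  obtain ⟨hmem, hlb⟩ := orderStat_isLeast v hr hrn
  refine ⟨j, univ.filter (fun i => v i < v j), by simp, ?_, ?_, ?_, hj⟩
  · -- card = r - 1
    have hfe : (univ.filter (fun i => v i ≤ v j)) = insert j (univ.filter (fun i => v i < v j)) := by
      ext i
      simp only [Finset.mem_filter, Finset.mem_insert, Finset.mem_univ, true_and]
      constructor
      · intro hi
        rcases lt_or_eq_of_le hi with h | h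
        · exact Or.inr h
        · exact Or.inl (hinj h)
      · rintro (rfl | hi)
        · exact le_refl _
        · exact hi.le
    have hge : r ≤ (univ.filter (fun i => v i < v j)).card + 1 := by
      have : r ≤ (univ.filter (fun i => v i ≤ v j)).card := by
        have := hmem
        simp only [Set.mem_setOf_eq, ← hj] at this
        exact this
      rw [hfe, Finset.card_insert_of_notMem (by simp)] at this
      omega
    have hle : (univ.filter (fun i => v i < v j)).card ≤ r - 1 := by
      by_contra hcon
      push_neg at hcon
      have hSr : r ≤ (univ.filter (fun i => v i < v j)).card := by omega
      have hSne : (univ.filter (fun i => v i < v j)).Nonempty :=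
        Finset.card_pos.mp (by omega)
      set b := (univ.filter (fun i => v i < v j)).sup' hSne v with hb
      have hbU : r ≤ (univ.filter (fun i => v i ≤ b)).card := by
        refine hSr.trans (Finset.card_le_card ?_)
        intro i hi
        simp only [Finset.mem_filter] at hi ⊢
        exact ⟨hi.1, Finset.le_sup' v (Finset.mem_filter.mpr hi)⟩
      have hblt : b < v j := by
        rw [hb, Finset.sup'_lt_iff]
        intro i hi; exact (Finset.mem_filter.mp hi).2
      have := hlb hbU
      rw [← hj] at this
      exact absurd (this.trans_lt hblt) (lt_irrefl _)
    omega
  · intro i hi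
    exact (Finset.mem_filter.mp hi).2
  · intro i hij hiS
    rcases lt_trichotomy (v j) (v i) with h | h | h
    · exact h
    · exact absurd (hinj h.symm) hij
    · exact absurd (Finset.mem_filter.mpr ⟨Finset.mem_univ i, h⟩) hiS

open Classical Finset in
lemma concomMin_lt_iff {n : ℕ} (v w : Fin n → ℝ) {r : ℕ} (hr : 1 ≤ r) (hrn : r ≤ n) (c : ℝ) :
    c < concomMin v w r ↔ ∀ i, orderStat v r ≤ v i → c < w i := by
  obtain ⟨i0, hi0⟩ := orderStat_exists_eq v hr hrn
  set Fs : Finset ℝ := (univ.filter (fun i => orderStat v r ≤ v i)).image w with hFs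
  have hFne : Fs.Nonempty := ⟨w i0, Finset.mem_image.mpr ⟨i0,
    Finset.mem_filter.mpr ⟨Finset.mem_univ i0, hi0.ge⟩, rfl⟩⟩
  have hset : {y : ℝ | ∃ i, orderStat v r ≤ v i ∧ w i = y} = ↑Fs := by
    ext y
    simp only [Set.mem_setOf_eq, hFs, Finset.coe_image, Set.mem_image, Finset.mem_coe,
      Finset.mem_filter, Finset.mem_univ, true_and]
  rw [concomMin, hset, hFne.csInf_eq_min', Finset.lt_min'_iff]
  constructor
  · intro h i hi
    exact h (w i) (Finset.mem_image.mpr ⟨i, Finset.mem_filter.mpr ⟨Finset.mem_univ i, hi⟩, rfl⟩)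
  · rintro h y hy
    obtain ⟨i, hi, rfl⟩ := Finset.mem_image.mp hy
    exact h i (Finset.mem_filter.mp hi).2

open Classical Finset in
/-- The canonical event set: `a < X_{(r)}` and all concomitants of ranks `≥ r` exceed `c`. -/
def Aset (n r : ℕ) (a c : ℝ) : Set (Fin n → ℝ × ℝ) :=
  {v | a < orderStat (fun i => (v i).1) r ∧
    ∀ i, orderStat (fun i => (v i).1) r ≤ (v i).1 → c < (v i).2}

open Classical Finset in
def cellSet (n r : ℕ) (a c : ℝ) (j : Fin n) (S : Finset (Fin n)) : Set (Fin n → ℝ × ℝ) :=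
  {v | (∀ i ∈ S, (v i).1 < (v j).1) ∧
    (∀ i, i ≠ j → i ∉ S → (v j).1 < (v i).1 ∧ c < (v i).2) ∧
    a < (v j).1 ∧ c < (v j).2}

open Classical Finset in
lemma cell_subset_Aset {n r : ℕ} (hr : 1 ≤ r) (hrn : r ≤ n) (a c : ℝ)
    (j : Fin n) (S : Finset (Fin n)) (hjS : j ∉ S) (hcard : S.card = r - 1) :
    cellSet n r a c j S ⊆ Aset n r a c := by
  intro v hv
  obtain ⟨h1, h2, h3, h4⟩ := hv
  have hO : orderStat (fun i => (v i).1) r = (v j).1 :=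
    orderStat_eq_of_cell _ hr hrn j S hjS hcard h1 (fun i hij hiS => (h2 i hij hiS).1)
  refine ⟨by rw [hO]; exact h3, ?_⟩
  intro i hi
  rw [hO] at hi
  by_cases hij : i = j
  · subst hij; exact h4
  · by_cases hiS : i ∈ S
    · exact absurd hi (not_le.mpr (h1 i hiS))
    · exact (h2 i hij hiS).2

open Classical Finset in
lemma Aset_subset_iUnion {n r : ℕ} (hr : 1 ≤ r) (hrn : r ≤ n) (a c : ℝ) (v : Fin n → ℝ × ℝ)
    (hinj : Function.Injective (fun i => (v i).1)) (hv : v ∈ Aset n r a c) :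
    ∃ (j : Fin n) (S : Finset (Fin n)), S ∈ (Finset.univ.erase j).powersetCard (r - 1) ∧
      v ∈ cellSet n r a c j S := by
  obtain ⟨j, S, hjS, hcard, hlt, hgt, hOj⟩ := exists_cell_of_inj (fun i => (v i).1) hr hrn hinj
  obtain ⟨hva, hvc⟩ := hv
  refine ⟨j, S, ?_, ?_⟩
  · rw [Finset.mem_powersetCard]
    refine ⟨fun i hi => Finset.mem_erase.mpr ⟨fun hij => hjS (hij ▸ hi), Finset.mem_univ i⟩, hcard⟩
  · refine ⟨hlt, fun i hij hiS => ⟨hgt i hij hiS, ?_⟩, by rw [← hOj] at hva; exact hva, ?_⟩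
    · exact hvc i (hOj ▸ (hgt i hij hiS).le)
    · exact hvc j hOj.ge

open Classical Finset in
lemma cell_mem_S_iff {n r : ℕ} (a c : ℝ) (j : Fin n) (S : Finset (Fin n))
    (v : Fin n → ℝ × ℝ) (hv : v ∈ cellSet n r a c j S) (hjS : j ∉ S) (i : Fin n) :
    i ∈ S ↔ (v i).1 < (v j).1 := by
  obtain ⟨h1, h2, _, _⟩ := hv
  constructor
  · exact h1 i
  · intro hi
    by_contra hiS
    by_cases hij : i = j
    · subst hij; exact lt_irrefl _ hi
    · exact absurd ((h2 i hij hiS).1.trans hi) (lt_irrefl _)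

open Classical Finset in
lemma cell_disjoint {n r : ℕ} (a c : ℝ) {j j' : Fin n} {S S' : Finset (Fin n)}
    (hjS : j ∉ S) (hjS' : j' ∉ S') (hcard : S.card = r - 1) (hcard' : S'.card = r - 1)
    (hne : (⟨j, S⟩ : (_ : Fin n) × Finset (Fin n)) ≠ ⟨j', S'⟩) :
    Disjoint (cellSet n r a c j S) (cellSet n r a c j' S') := by
  rw [Set.disjoint_left]
  intro v hv hv'
  have hiff := cell_mem_S_iff a c j S v hv hjS
  have hiff' := cell_mem_S_iff a c j' S' v hv' hjS'
  have haux : ∀ (ja jb : Fin n) (Sa Sb : Finset (Fin n)), ja ∉ Sa → jb ∉ Sb →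
      Sa.card = r - 1 → Sb.card = r - 1 →
      (∀ i, i ∈ Sa ↔ (v i).1 < (v ja).1) → (∀ i, i ∈ Sb ↔ (v i).1 < (v jb).1) →
      (v jb).1 < (v ja).1 → False := by
    intro ja jb Sa Sb hja hjb hca hcb hfa hfb hlt
    have hjbSa : jb ∈ Sa := (hfa jb).mpr hlt
    have hsub : Sb ⊆ Sa := by
      intro i hi
      exact (hfa i).mpr (((hfb i).mp hi).trans hlt)
    have : Sb = Sa := Finset.eq_of_subset_of_card_le hsub (by omega)
    exact hjb (this ▸ hjbSa)
  by_cases hjj : j = j'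
  · subst hjj
    apply hne
    have : S = S' := by
      ext i; rw [hiff i, hiff' i]
    exact this ▸ rfl
  · rcases lt_trichotomy ((v j).1) ((v j').1) with h | h | h
    · exact haux j' j S' S hjS' hjS hcard' hcard hiff' hiff h
    · have hj'j : j' ≠ j := fun hh => hjj hh.symm
      by_cases hj'S : j' ∈ S
      · exact absurd ((hiff j').mp hj'S) (by rw [h]; exact lt_irrefl _)
      · exact absurd ((hv.2.1 j' hj'j hj'S).1) (by rw [h]; exact lt_irrefl _)
    · exact haux j j' S S' hjS hjS' hcard hcard' hiff hiff' h

open Classical Finset in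
lemma measurable_orderStat {n r : ℕ} (hr : 1 ≤ r) (hrn : r ≤ n) :
    Measurable (fun v : Fin n → ℝ × ℝ => orderStat (fun i => (v i).1) r) := by
  apply measurable_of_Iic
  intro x
  have hset : (fun v : Fin n → ℝ × ℝ => orderStat (fun i => (v i).1) r) ⁻¹' (Set.Iic x)
      = {v : Fin n → ℝ × ℝ | r ≤ (Finset.univ.filter (fun i => (v i).1 ≤ x)).card} := by
    ext v
    simp only [Set.mem_preimage, Set.mem_Iic, Set.mem_setOf_eq]
    exact orderStat_le_iff (fun i => (v i).1) hr hrn x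
  rw [hset]
  have hcard : ∀ v : Fin n → ℝ × ℝ, (Finset.univ.filter (fun i => (v i).1 ≤ x)).card
      = ∑ i : Fin n, if (v i).1 ≤ x then 1 else 0 := by
    intro v; rw [Finset.card_filter]
  have hmeas : Measurable (fun v : Fin n → ℝ × ℝ =>
      ∑ i : Fin n, if (v i).1 ≤ x then (1 : ℕ) else 0) := by
    apply Finset.measurable_sum
    intro i _
    apply Measurable.ite _ measurable_const measurable_const
    exact measurableSet_le ((measurable_fst).comp (measurable_pi_apply i)) measurable_const
  have : {v : Fin n → ℝ × ℝ | r ≤ (Finset.univ.filter (fun i => (v i).1 ≤ x)).card}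
      = (fun v : Fin n → ℝ × ℝ => ∑ i : Fin n, if (v i).1 ≤ x then (1:ℕ) else 0) ⁻¹' {m | r ≤ m} := by
    ext v
    simp only [Set.mem_setOf_eq, Set.mem_preimage]
    rw [hcard v]
  rw [this]
  exact hmeas (by trivial)

open Classical Finset in
lemma measurableSet_Aset {n r : ℕ} (hr : 1 ≤ r) (hrn : r ≤ n) (a c : ℝ) :
    MeasurableSet (Aset n r a c) := by
  have hO := measurable_orderStat (n := n) hr hrn
  have h1 : MeasurableSet {v : Fin n → ℝ × ℝ | a < orderStat (fun i => (v i).1) r} :=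
    hO measurableSet_Ioi
  have h2 : ∀ i : Fin n, MeasurableSet {v : Fin n → ℝ × ℝ |
      orderStat (fun i => (v i).1) r ≤ (v i).1 → c < (v i).2} := by
    intro i
    have ha : MeasurableSet {v : Fin n → ℝ × ℝ | orderStat (fun i => (v i).1) r ≤ (v i).1} :=
      measurableSet_le hO ((measurable_fst).comp (measurable_pi_apply i))
    have hb : MeasurableSet {v : Fin n → ℝ × ℝ | c < (v i).2} :=
      measurableSet_lt measurable_const ((measurable_snd).comp (measurable_pi_apply i))
    have : {v : Fin n → ℝ × ℝ | orderStat (fun i => (v i).1) r ≤ (v i).1 → c < (v i).2}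
        = {v : Fin n → ℝ × ℝ | orderStat (fun i => (v i).1) r ≤ (v i).1}ᶜ ∪
          {v : Fin n → ℝ × ℝ | c < (v i).2} := by
      ext v; simp [imp_iff_not_or]
    rw [this]
    exact ha.compl.union hb
  have : Aset n r a c = {v : Fin n → ℝ × ℝ | a < orderStat (fun i => (v i).1) r} ∩
      ⋂ i : Fin n, {v : Fin n → ℝ × ℝ | orderStat (fun i => (v i).1) r ≤ (v i).1 → c < (v i).2} := by
    ext v
    simp only [Aset, Set.mem_setOf_eq, Set.mem_inter_iff, Set.mem_iInter]
  rw [this]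
  exact h1.inter (MeasurableSet.iInter h2)

open Classical Finset in
lemma measurableSet_cellSet {n r : ℕ} (a c : ℝ) (j : Fin n) (S : Finset (Fin n)) :
    MeasurableSet (cellSet n r a c j S) := by
  have hc1 : ∀ i : Fin n, Measurable (fun v : Fin n → ℝ × ℝ => (v i).1) :=
    fun i => (measurable_fst).comp (measurable_pi_apply i)
  have hc2 : ∀ i : Fin n, Measurable (fun v : Fin n → ℝ × ℝ => (v i).2) :=
    fun i => (measurable_snd).comp (measurable_pi_apply i)
  have : cellSet n r a c j S =
      (⋂ i ∈ (S : Set (Fin n)), {v : Fin n → ℝ × ℝ | (v i).1 < (v j).1}) ∩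
      ((⋂ i ∈ {i : Fin n | i ≠ j ∧ i ∉ S},
        {v : Fin n → ℝ × ℝ | (v j).1 < (v i).1} ∩ {v | c < (v i).2}) ∩
      ({v : Fin n → ℝ × ℝ | a < (v j).1} ∩ {v | c < (v j).2})) := by
    ext v
    simp only [cellSet, Set.mem_setOf_eq, Set.mem_inter_iff, Set.mem_iInter, Finset.mem_coe]
    constructor
    · rintro ⟨ha, hb, hcc, hd⟩
      exact ⟨ha, fun i hi => ⟨(hb i hi.1 hi.2).1, (hb i hi.1 hi.2).2⟩, hcc, hd⟩
    · rintro ⟨ha, hb, hcc, hd⟩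
      exact ⟨ha, fun i h1 h2 => ⟨(hb i ⟨h1, h2⟩).1, (hb i ⟨h1, h2⟩).2⟩, hcc, hd⟩
  rw [this]
  refine MeasurableSet.inter ?_ (MeasurableSet.inter ?_ (MeasurableSet.inter ?_ ?_))
  · exact MeasurableSet.biInter (Set.to_countable _)
      (fun i _ => measurableSet_lt (hc1 i) (hc1 j))
  · exact MeasurableSet.biInter (Set.to_countable _)
      (fun i _ => (measurableSet_lt (hc1 j) (hc1 i)).inter
        (measurableSet_lt measurable_const (hc2 i)))
  · exact measurableSet_lt measurable_const (hc1 j)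
  · exact measurableSet_lt measurable_const (hc2 j)

open Classical Finset MeasureTheory in
lemma card_filter_succAbove {m : ℕ} (j : Fin (m + 1)) (S : Finset (Fin (m + 1)))
    (hS : S ⊆ Finset.univ.erase j) :
    (Finset.univ.filter (fun k : Fin m => j.succAbove k ∈ S)).card = S.card := by
  apply Finset.card_bij (fun k _ => j.succAbove k)
  · intro k hk; exact (Finset.mem_filter.mp hk).2
  · intro k1 h1 k2 h2 h
    exact Fin.succAbove_right_injective h
  · intro i hi
    have hij : i ≠ j := (Finset.mem_erase.mp (hS hi)).1
    obtain ⟨k, hk⟩ := Fin.exists_succAbove_eq hij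
    exact ⟨k, Finset.mem_filter.mpr ⟨Finset.mem_univ k, by rw [hk]; exact hi⟩, hk⟩

open Classical Finset MeasureTheory in
lemma cell_measure {m r : ℕ} (hr : 1 ≤ r) (hrm : r ≤ m + 1)
    (ν1 : Measure (ℝ × ℝ)) [IsProbabilityMeasure ν1] (a c : ℝ)
    (j : Fin (m + 1)) (S : Finset (Fin (m + 1))) (hS : S ⊆ Finset.univ.erase j)
    (hcard : S.card = r - 1) :
    Measure.pi (fun _ : Fin (m + 1) => ν1) (cellSet (m + 1) r a c j S)
      = ∫⁻ p, Set.indicator {q : ℝ × ℝ | a < q.1 ∧ c < q.2}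
          (fun q => ν1 {q' : ℝ × ℝ | q'.1 < q.1} ^ (r - 1) *
            ν1 {q' : ℝ × ℝ | q.1 < q'.1 ∧ c < q'.2} ^ (m + 1 - r)) p ∂ν1 := by
  have hjS : j ∉ S := fun h => absurd (Finset.mem_erase.mp (hS h)).1 (by simp)
  set e := MeasurableEquiv.piFinSuccAbove (fun _ : Fin (m + 1) => ℝ × ℝ) j with he
  have hmp := measurePreserving_piFinSuccAbove (fun _ : Fin (m + 1) => ν1) j
  set sset : Set ((ℝ × ℝ) × (Fin m → ℝ × ℝ)) :=
    {pu | (a < pu.1.1 ∧ c < pu.1.2) ∧ ∀ k : Fin m,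
      if j.succAbove k ∈ S then (pu.2 k).1 < pu.1.1
      else (pu.1.1 < (pu.2 k).1 ∧ c < (pu.2 k).2)} with hsset
  have hmeas_k : ∀ k : Fin m, MeasurableSet {pu : (ℝ × ℝ) × (Fin m → ℝ × ℝ) |
      if j.succAbove k ∈ S then (pu.2 k).1 < pu.1.1
      else (pu.1.1 < (pu.2 k).1 ∧ c < (pu.2 k).2)} := by
    intro k
    by_cases hk : j.succAbove k ∈ S
    · simp only [hk, if_true]
      exact measurableSet_lt (measurable_fst.comp ((measurable_pi_apply k).comp measurable_snd))
        (measurable_fst.comp measurable_fst)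
    · simp only [hk, if_false]
      have hrw : {pu : (ℝ × ℝ) × (Fin m → ℝ × ℝ) | pu.1.1 < (pu.2 k).1 ∧ c < (pu.2 k).2}
          = {pu : (ℝ × ℝ) × (Fin m → ℝ × ℝ) | pu.1.1 < (pu.2 k).1} ∩
            {pu : (ℝ × ℝ) × (Fin m → ℝ × ℝ) | c < (pu.2 k).2} := rfl
      rw [hrw]
      exact (measurableSet_lt (measurable_fst.comp measurable_fst)
          (measurable_fst.comp ((measurable_pi_apply k).comp measurable_snd))).inter
        (measurableSet_lt measurable_const
          (measurable_snd.comp ((measurable_pi_apply k).comp measurable_snd)))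
  have hsmeas : MeasurableSet sset := by
    rw [hsset]
    have : {pu : (ℝ × ℝ) × (Fin m → ℝ × ℝ) | (a < pu.1.1 ∧ c < pu.1.2) ∧ ∀ k : Fin m,
        if j.succAbove k ∈ S then (pu.2 k).1 < pu.1.1
        else (pu.1.1 < (pu.2 k).1 ∧ c < (pu.2 k).2)} =
        ({pu | a < pu.1.1} ∩ {pu | c < pu.1.2}) ∩ ⋂ k : Fin m, {pu |
          if j.succAbove k ∈ S then (pu.2 k).1 < pu.1.1
          else (pu.1.1 < (pu.2 k).1 ∧ c < (pu.2 k).2)} := by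
      ext pu
      simp only [Set.mem_setOf_eq, Set.mem_inter_iff, Set.mem_iInter, and_assoc]
    rw [this]
    refine MeasurableSet.inter (MeasurableSet.inter ?_ ?_) (MeasurableSet.iInter hmeas_k)
    · exact measurableSet_lt measurable_const (measurable_fst.comp measurable_fst)
    · exact measurableSet_lt measurable_const (measurable_snd.comp measurable_fst)
  have hpre : e ⁻¹' sset = cellSet (m + 1) r a c j S := by
    ext v
    have hev : e v = (v j, fun k => v (j.succAbove k)) := rfl
    simp only [Set.mem_preimage, hev, hsset, Set.mem_setOf_eq, cellSet]
    constructor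
    · rintro ⟨⟨h1, h2⟩, h3⟩
      refine ⟨?_, ?_, h1, h2⟩
      · intro i hi
        have hij : i ≠ j := (Finset.mem_erase.mp (hS hi)).1
        obtain ⟨k, hk⟩ := Fin.exists_succAbove_eq hij
        have := h3 k
        rw [hk, if_pos hi] at this
        exact this
      · intro i hij hiS
        obtain ⟨k, hk⟩ := Fin.exists_succAbove_eq hij
        have := h3 k
        rw [hk, if_neg hiS] at this
        exact this
    · rintro ⟨h1, h2, h3, h4⟩
      refine ⟨⟨h3, h4⟩, ?_⟩
      intro k
      by_cases hk : j.succAbove k ∈ S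
      · rw [if_pos hk]; exact h1 _ hk
      · rw [if_neg hk]
        exact h2 _ (Fin.succAbove_ne j k) hk
  have hstep : Measure.pi (fun _ : Fin (m + 1) => ν1) (cellSet (m + 1) r a c j S)
      = (ν1.prod (Measure.pi fun _ : Fin m => ν1)) sset := by
    rw [← hpre]
    exact hmp.measure_preimage hsmeas.nullMeasurableSet
  rw [hstep, Measure.prod_apply hsmeas]
  apply lintegral_congr
  intro p
  by_cases hp : a < p.1 ∧ c < p.2
  · rw [Set.indicator_of_mem (show p ∈ {q : ℝ × ℝ | a < q.1 ∧ c < q.2} from hp)]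
    have hslice : Prod.mk p ⁻¹' sset = Set.pi Set.univ (fun k : Fin m =>
        if j.succAbove k ∈ S then {q : ℝ × ℝ | q.1 < p.1}
        else {q : ℝ × ℝ | p.1 < q.1 ∧ c < q.2}) := by
      ext u
      simp only [Set.mem_preimage, hsset, Set.mem_setOf_eq, Set.mem_pi, Set.mem_univ,
        forall_true_left, hp, true_and]
      apply forall_congr'
      intro k
      by_cases hk : j.succAbove k ∈ S
      · simp only [hk, if_true]; rfl
      · simp only [hk, if_false]; rfl
    rw [hslice, Measure.pi_pi]
    have hval : ∀ k : Fin m, ν1 (if j.succAbove k ∈ S then {q : ℝ × ℝ | q.1 < p.1}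
        else {q : ℝ × ℝ | p.1 < q.1 ∧ c < q.2})
        = if j.succAbove k ∈ S then ν1 {q : ℝ × ℝ | q.1 < p.1}
          else ν1 {q : ℝ × ℝ | p.1 < q.1 ∧ c < q.2} := fun k => apply_ite ν1 _ _ _
    rw [Finset.prod_congr rfl (fun k _ => hval k), Finset.prod_ite, Finset.prod_const,
      Finset.prod_const, card_filter_succAbove j S hS, hcard]
    congr 1
    have h1 : (Finset.univ.filter (fun k : Fin m => ¬ j.succAbove k ∈ S)).card
        = m - (r - 1) := by
      have := Finset.card_filter_add_card_filter_not
        (s := (Finset.univ : Finset (Fin m))) (p := fun k : Fin m => j.succAbove k ∈ S)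
      rw [card_filter_succAbove j S hS, hcard] at this
      simp only [Finset.card_univ, Fintype.card_fin] at this
      omega
    rw [h1]
    congr 1
    omega
  · rw [Set.indicator_of_notMem (show p ∉ {q : ℝ × ℝ | a < q.1 ∧ c < q.2} from hp)]
    have hslice : Prod.mk p ⁻¹' sset = ∅ := by
      ext u
      simp only [Set.mem_preimage, hsset, Set.mem_setOf_eq, Set.mem_empty_iff_false,
        iff_false, not_and]
      intro h
      exact absurd h hp
    rw [hslice, measure_empty]

open Classical Finset MeasureTheory in
lemma ninj_null {m : ℕ} (ν1 : Measure (ℝ × ℝ)) [IsProbabilityMeasure ν1]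
    (hx0 : ∀ x : ℝ, ν1 {q : ℝ × ℝ | q.1 = x} = 0) :
    Measure.pi (fun _ : Fin (m + 1) => ν1)
      {v : Fin (m + 1) → ℝ × ℝ | ¬ Function.Injective (fun i => (v i).1)} = 0 := by
  have hpair : ∀ (i i' : Fin (m + 1)), i' ≠ i →
      Measure.pi (fun _ : Fin (m + 1) => ν1) {v : Fin (m + 1) → ℝ × ℝ | (v i).1 = (v i').1} = 0 := by
    intro i i' hne
    obtain ⟨k, hk⟩ := Fin.exists_succAbove_eq hne
    set e := MeasurableEquiv.piFinSuccAbove (fun _ : Fin (m + 1) => ℝ × ℝ) i with he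
    have hmp := measurePreserving_piFinSuccAbove (fun _ : Fin (m + 1) => ν1) i
    set sset : Set ((ℝ × ℝ) × (Fin m → ℝ × ℝ)) := {pu | pu.1.1 = (pu.2 k).1} with hsset
    have hsmeas : MeasurableSet sset :=
      measurableSet_eq_fun (measurable_fst.comp measurable_fst)
        (measurable_fst.comp ((measurable_pi_apply k).comp measurable_snd))
    have hpre : e ⁻¹' sset = {v : Fin (m + 1) → ℝ × ℝ | (v i).1 = (v i').1} := by
      ext v
      have hev : e v = (v i, fun k' => v (i.succAbove k')) := rfl
      simp only [Set.mem_preimage, hev, hsset, Set.mem_setOf_eq, hk]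
    rw [← hpre, hmp.measure_preimage hsmeas.nullMeasurableSet, Measure.prod_apply hsmeas]
    have hzero : ∀ p : ℝ × ℝ, (Measure.pi fun _ : Fin m => ν1) (Prod.mk p ⁻¹' sset) = 0 := by
      intro p
      have : Prod.mk p ⁻¹' sset = (fun u : Fin m → ℝ × ℝ => u k) ⁻¹' {q : ℝ × ℝ | q.1 = p.1} := by
        ext u
        simp only [Set.mem_preimage, hsset, Set.mem_setOf_eq, eq_comm]
      rw [this]
      exact Measure.pi_eval_preimage_null _ (hx0 p.1)
    simp only [hzero, lintegral_zero]
  have hsub : {v : Fin (m + 1) → ℝ × ℝ | ¬ Function.Injective (fun i => (v i).1)} ⊆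
      ⋃ (i : Fin (m + 1)) (i' : Fin (m + 1)) (_ : i' ≠ i),
        {v : Fin (m + 1) → ℝ × ℝ | (v i).1 = (v i').1} := by
    intro v hv
    rw [Set.mem_setOf_eq, Function.not_injective_iff] at hv
    obtain ⟨i, i', hvv, hne⟩ := hv
    exact Set.mem_iUnion.mpr ⟨i, Set.mem_iUnion.mpr ⟨i', Set.mem_iUnion.mpr ⟨fun h => hne (h ▸ rfl), hvv⟩⟩⟩
  refine measure_mono_null hsub ?_
  refine measure_iUnion_null fun i => measure_iUnion_null fun i' => ?_
  by_cases h : i' = i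
  · simp [h]
  · rw [Set.iUnion_eq_if, if_pos (show i' ≠ i from h)]
    exact hpair i i' h

open Classical Finset MeasureTheory in
lemma Aset_measure {m r : ℕ} (hr : 1 ≤ r) (hrm : r ≤ m + 1)
    (ν1 : Measure (ℝ × ℝ)) [IsProbabilityMeasure ν1]
    (hx0 : ∀ x : ℝ, ν1 {q : ℝ × ℝ | q.1 = x} = 0) (a c : ℝ) :
    Measure.pi (fun _ : Fin (m + 1) => ν1) (Aset (m + 1) r a c)
      = ((m + 1) * Nat.choose m (r - 1) : ℕ) *
        ∫⁻ p, Set.indicator {q : ℝ × ℝ | a < q.1 ∧ c < q.2}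
          (fun q => ν1 {q' : ℝ × ℝ | q'.1 < q.1} ^ (r - 1) *
            ν1 {q' : ℝ × ℝ | q.1 < q'.1 ∧ c < q'.2} ^ (m + 1 - r)) p ∂ν1 := by
  set ν := Measure.pi (fun _ : Fin (m + 1) => ν1) with hν
  set P : Finset ((_ : Fin (m + 1)) × Finset (Fin (m + 1))) :=
    Finset.univ.sigma (fun j => (Finset.univ.erase j).powersetCard (r - 1)) with hP
  have hmemP : ∀ p ∈ P, p.2 ⊆ Finset.univ.erase p.1 ∧ p.2.card = r - 1 := by
    intro p hp
    rw [hP, Finset.mem_sigma] at hp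
    exact Finset.mem_powersetCard.mp hp.2
  have hjS : ∀ p ∈ P, p.1 ∉ p.2 := by
    intro p hp h
    exact absurd (Finset.mem_erase.mp ((hmemP p hp).1 h)).1 (by simp)
  set U := ⋃ p ∈ P, cellSet (m + 1) r a c p.1 p.2 with hUdef
  have hUmeas : ν U = ∑ p ∈ P, ν (cellSet (m + 1) r a c p.1 p.2) := by
    apply measure_biUnion_finset
    · intro p hp p' hp' hne
      exact cell_disjoint a c (hjS p hp) (hjS p' hp') (hmemP p hp).2 (hmemP p' hp').2
        (by rwa [Sigma.eta, Sigma.eta])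
    · intro p _
      exact measurableSet_cellSet a c p.1 p.2
  have hcell : ∀ p ∈ P, ν (cellSet (m + 1) r a c p.1 p.2)
      = ∫⁻ q, Set.indicator {q : ℝ × ℝ | a < q.1 ∧ c < q.2}
          (fun q => ν1 {q' : ℝ × ℝ | q'.1 < q.1} ^ (r - 1) *
            ν1 {q' : ℝ × ℝ | q.1 < q'.1 ∧ c < q'.2} ^ (m + 1 - r)) q ∂ν1 := by
    intro p hp
    exact cell_measure hr hrm ν1 a c p.1 p.2 (hmemP p hp).1 (hmemP p hp).2
  have hcardP : P.card = (m + 1) * Nat.choose m (r - 1) := by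
    rw [hP, Finset.card_sigma]
    have : ∀ j : Fin (m + 1), ((Finset.univ.erase j).powersetCard (r - 1)).card
        = Nat.choose m (r - 1) := by
      intro j
      rw [Finset.card_powersetCard, Finset.card_erase_of_mem (Finset.mem_univ j)]
      simp
    rw [Finset.sum_congr rfl (fun j _ => this j), Finset.sum_const]
    simp [mul_comm]
  have hsum : ν U = ((m + 1) * Nat.choose m (r - 1) : ℕ) *
      ∫⁻ q, Set.indicator {q : ℝ × ℝ | a < q.1 ∧ c < q.2}
        (fun q => ν1 {q' : ℝ × ℝ | q'.1 < q.1} ^ (r - 1) *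
          ν1 {q' : ℝ × ℝ | q.1 < q'.1 ∧ c < q'.2} ^ (m + 1 - r)) q ∂ν1 := by
    rw [hUmeas, Finset.sum_congr rfl hcell, Finset.sum_const, ← hcardP, nsmul_eq_mul]
  rw [← hsum]
  have hle1 : U ⊆ Aset (m + 1) r a c := by
    apply Set.iUnion₂_subset
    intro p hp
    exact cell_subset_Aset hr hrm a c p.1 p.2 (hjS p hp) (hmemP p hp).2
  have hle2 : Aset (m + 1) r a c ⊆ U ∪
      {v : Fin (m + 1) → ℝ × ℝ | ¬ Function.Injective (fun i => (v i).1)} := by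
    intro v hv
    by_cases hinj : Function.Injective (fun i : Fin (m + 1) => (v i).1)
    · obtain ⟨j, S, hmem, hcellmem⟩ := Aset_subset_iUnion hr hrm a c v hinj hv
      left
      refine Set.mem_biUnion (show (⟨j, S⟩ : (_ : Fin (m+1)) × Finset (Fin (m+1))) ∈ P from ?_)
        hcellmem
      rw [hP, Finset.mem_sigma]
      exact ⟨Finset.mem_univ j, hmem⟩
    · right; exact hinj
  refine le_antisymm ?_ (measure_mono hle1)
  calc ν (Aset (m + 1) r a c) ≤ ν (U ∪ {v : Fin (m + 1) → ℝ × ℝ |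
      ¬ Function.Injective (fun i => (v i).1)}) := measure_mono hle2
  _ ≤ ν U + ν {v : Fin (m + 1) → ℝ × ℝ | ¬ Function.Injective (fun i => (v i).1)} :=
      measure_union_le _ _
  _ = ν U := by rw [ninj_null ν1 hx0, add_zero]

open Classical Finset MeasureTheory ENNReal in
lemma indicator_lintegral_density (f : ℝ → ℝ → ℝ) (hf_nonneg : ∀ x y, 0 ≤ f x y)
    (hf_meas : Measurable (Function.uncurry f))
    (a c : ℝ) (g2 : ℝ → ℝ≥0∞) (hg2 : Measurable g2) :
    ∫⁻ p, Set.indicator {q : ℝ × ℝ | a < q.1 ∧ c < q.2} (fun q => g2 q.1) p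
        ∂((volume : Measure (ℝ × ℝ)).withDensity (fun p => ENNReal.ofReal (f p.1 p.2)))
      = ∫⁻ x in Set.Ioi a, g2 x * ∫⁻ y in Set.Ioi c, ENNReal.ofReal (f x y) := by
  have hf' : Measurable (fun p : ℝ × ℝ => ENNReal.ofReal (f p.1 p.2)) := by
    apply Measurable.ennreal_ofReal
    exact hf_meas
  have hEmeas : MeasurableSet {q : ℝ × ℝ | a < q.1 ∧ c < q.2} :=
    (measurableSet_lt measurable_const measurable_fst).inter
      (measurableSet_lt measurable_const measurable_snd)
  have hind : Measurable (Set.indicator {q : ℝ × ℝ | a < q.1 ∧ c < q.2}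
      (fun q : ℝ × ℝ => g2 q.1)) :=
    (hg2.comp measurable_fst).indicator hEmeas
  rw [lintegral_withDensity_eq_lintegral_mul volume hf' hind]
  have hpt : (fun p : ℝ × ℝ => ENNReal.ofReal (f p.1 p.2) *
      Set.indicator {q : ℝ × ℝ | a < q.1 ∧ c < q.2} (fun q : ℝ × ℝ => g2 q.1) p)
      = Set.indicator {q : ℝ × ℝ | a < q.1 ∧ c < q.2}
        (fun q => g2 q.1 * ENNReal.ofReal (f q.1 q.2)) := by
    funext p
    by_cases hp : p ∈ {q : ℝ × ℝ | a < q.1 ∧ c < q.2}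
    · rw [Set.indicator_of_mem hp, Set.indicator_of_mem hp, mul_comm]
    · rw [Set.indicator_of_notMem hp, Set.indicator_of_notMem hp, mul_zero]
  simp only [Pi.mul_apply] at hpt ⊢
  rw [hpt]
  have hindmeas : Measurable (Set.indicator {q : ℝ × ℝ | a < q.1 ∧ c < q.2}
      (fun q => g2 q.1 * ENNReal.ofReal (f q.1 q.2))) :=
    ((hg2.comp measurable_fst).mul hf').indicator hEmeas
  rw [MeasureTheory.Measure.volume_eq_prod, MeasureTheory.lintegral_prod _ hindmeas.aemeasurable]
  have hinner : ∀ x : ℝ, (∫⁻ y, Set.indicator {q : ℝ × ℝ | a < q.1 ∧ c < q.2}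
      (fun q => g2 q.1 * ENNReal.ofReal (f q.1 q.2)) (x, y))
      = Set.indicator (Set.Ioi a)
          (fun x' => g2 x' * ∫⁻ y in Set.Ioi c, ENNReal.ofReal (f x' y)) x := by
    intro x
    by_cases hx : a < x
    · rw [Set.indicator_of_mem (Set.mem_Ioi.mpr hx)]
      have heq : (fun y => Set.indicator {q : ℝ × ℝ | a < q.1 ∧ c < q.2}
          (fun q => g2 q.1 * ENNReal.ofReal (f q.1 q.2)) (x, y))
          = fun y => Set.indicator (Set.Ioi c)
            (fun y' => g2 x * ENNReal.ofReal (f x y')) y := by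
        funext y
        by_cases hy : c < y
        · rw [Set.indicator_of_mem (show (x, y) ∈ {q : ℝ × ℝ | a < q.1 ∧ c < q.2} from ⟨hx, hy⟩),
            Set.indicator_of_mem (Set.mem_Ioi.mpr hy)]
        · rw [Set.indicator_of_notMem (show (x, y) ∉ {q : ℝ × ℝ | a < q.1 ∧ c < q.2}
              from fun h => hy h.2), Set.indicator_of_notMem (fun h => hy (Set.mem_Ioi.mp h))]
      rw [heq, lintegral_indicator measurableSet_Ioi]
      exact lintegral_const_mul _ (hf_meas.of_uncurry_left.ennreal_ofReal)
    · rw [Set.indicator_of_notMem (fun h => hx (Set.mem_Ioi.mp h))]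
      have heq : (fun y => Set.indicator {q : ℝ × ℝ | a < q.1 ∧ c < q.2}
          (fun q => g2 q.1 * ENNReal.ofReal (f q.1 q.2)) (x, y))
          = fun _ => (0 : ℝ≥0∞) := by
        funext y
        exact Set.indicator_of_notMem (fun h => hx h.1) _
      rw [heq, lintegral_zero]
  rw [lintegral_congr hinner, lintegral_indicator measurableSet_Ioi]

open Classical Finset MeasureTheory ENNReal in
lemma bochner_eq_lintegral (f : ℝ → ℝ → ℝ) (hf_nonneg : ∀ x y, 0 ≤ f x y)
    (hf_meas : Measurable (Function.uncurry f))
    (ν1 : Measure (ℝ × ℝ)) [IsProbabilityMeasure ν1]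
    (hν1 : ν1 = (volume : Measure (ℝ × ℝ)).withDensity (fun p => ENNReal.ofReal (f p.1 p.2)))
    (a c : ℝ) (k1 k2 : ℕ) :
    ∫ x in Set.Ioi a, (ν1 {q : ℝ × ℝ | q.1 < x}).toReal ^ k1 *
        (ν1 {q : ℝ × ℝ | x < q.1 ∧ c < q.2}).toReal ^ k2 * ∫ y in Set.Ioi c, f x y
      = (∫⁻ x in Set.Ioi a, (ν1 {q : ℝ × ℝ | q.1 < x} ^ k1 *
          ν1 {q : ℝ × ℝ | x < q.1 ∧ c < q.2} ^ k2) *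
          ∫⁻ y in Set.Ioi c, ENNReal.ofReal (f x y)).toReal := by
  have hf' : Measurable (fun p : ℝ × ℝ => ENNReal.ofReal (f p.1 p.2)) := by
    apply Measurable.ennreal_ofReal
    exact hf_meas
  -- total mass of the density is 1
  have htot : ∫⁻ x, ∫⁻ y, ENNReal.ofReal (f x y) ∂(volume : Measure ℝ) ∂(volume : Measure ℝ)
      = 1 := by
    have h1 : ν1 Set.univ = 1 := measure_univ
    rw [hν1, MeasureTheory.withDensity_apply _ MeasurableSet.univ, Measure.restrict_univ] at h1
    rw [← h1, MeasureTheory.Measure.volume_eq_prod, MeasureTheory.lintegral_prod _ hf'.aemeasurable]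
  have hHmeas : Measurable (fun x : ℝ => ∫⁻ y, ENNReal.ofReal (f x y) ∂(volume : Measure ℝ)) :=
    Measurable.lintegral_prod_right hf'
  have hae : ∀ᵐ x : ℝ, (∫⁻ y, ENNReal.ofReal (f x y) ∂(volume : Measure ℝ)) < ⊤ :=
    ae_lt_top hHmeas (by rw [htot]; exact one_ne_top)
  -- measurability of the real integrand
  have hFFmono : Monotone (fun x : ℝ => ν1 {q : ℝ × ℝ | q.1 < x}) :=
    fun x y hxy => measure_mono (fun q hq => lt_of_lt_of_le hq hxy)
  have hGGanti : Antitone (fun x : ℝ => ν1 {q : ℝ × ℝ | x < q.1 ∧ c < q.2}) :=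
    fun x y hxy => measure_mono (fun q hq => ⟨lt_of_le_of_lt hxy hq.1, hq.2⟩)
  have hGmeas : StronglyMeasurable (fun x : ℝ => ∫ y in Set.Ioi c, f x y) := by
    have : StronglyMeasurable (Function.uncurry f) := hf_meas.stronglyMeasurable
    exact this.integral_prod_right'
  have hintmeas : AEStronglyMeasurable (fun x : ℝ => (ν1 {q : ℝ × ℝ | q.1 < x}).toReal ^ k1 *
      (ν1 {q : ℝ × ℝ | x < q.1 ∧ c < q.2}).toReal ^ k2 * ∫ y in Set.Ioi c, f x y)
      (volume.restrict (Set.Ioi a)) := by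
    refine AEStronglyMeasurable.mul ?_ hGmeas.aestronglyMeasurable
    refine AEStronglyMeasurable.mul ?_ ?_
    · exact ((hFFmono.measurable.ennreal_toReal.pow_const k1)).aestronglyMeasurable
    · exact ((hGGanti.measurable.ennreal_toReal.pow_const k2)).aestronglyMeasurable
  have hnn : 0 ≤ᵐ[volume.restrict (Set.Ioi a)] (fun x : ℝ =>
      (ν1 {q : ℝ × ℝ | q.1 < x}).toReal ^ k1 *
      (ν1 {q : ℝ × ℝ | x < q.1 ∧ c < q.2}).toReal ^ k2 * ∫ y in Set.Ioi c, f x y) := by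
    apply Filter.Eventually.of_forall
    intro x
    apply mul_nonneg (mul_nonneg (pow_nonneg ENNReal.toReal_nonneg _)
      (pow_nonneg ENNReal.toReal_nonneg _))
    exact setIntegral_nonneg measurableSet_Ioi (fun y _ => hf_nonneg x y)
  rw [integral_eq_lintegral_of_nonneg_ae hnn hintmeas]
  congr 1
  -- a.e. equality of the lintegrands
  apply lintegral_congr_ae
  apply ae_restrict_of_ae
  filter_upwards [hae] with x hx
  have hGint : Integrable (fun y => f x y) (volume.restrict (Set.Ioi c)) := by
    constructor
    · exact (hf_meas.of_uncurry_left).aestronglyMeasurable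
    · rw [hasFiniteIntegral_iff_ofReal (Filter.Eventually.of_forall (fun y => hf_nonneg x y))]
      calc ∫⁻ y in Set.Ioi c, ENNReal.ofReal (f x y)
          ≤ ∫⁻ y, ENNReal.ofReal (f x y) ∂(volume : Measure ℝ) :=
            setLIntegral_le_lintegral _ _
      _ < ⊤ := hx
  have h1 : ENNReal.ofReal ((ν1 {q : ℝ × ℝ | q.1 < x}).toReal ^ k1 *
      (ν1 {q : ℝ × ℝ | x < q.1 ∧ c < q.2}).toReal ^ k2 * ∫ y in Set.Ioi c, f x y)
      = ENNReal.ofReal ((ν1 {q : ℝ × ℝ | q.1 < x}).toReal ^ k1) *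
        ENNReal.ofReal ((ν1 {q : ℝ × ℝ | x < q.1 ∧ c < q.2}).toReal ^ k2) *
        ENNReal.ofReal (∫ y in Set.Ioi c, f x y) := by
    rw [ENNReal.ofReal_mul (mul_nonneg (pow_nonneg ENNReal.toReal_nonneg _)
      (pow_nonneg ENNReal.toReal_nonneg _)),
      ENNReal.ofReal_mul (pow_nonneg ENNReal.toReal_nonneg _)]
  rw [h1, ENNReal.ofReal_pow ENNReal.toReal_nonneg, ENNReal.ofReal_pow ENNReal.toReal_nonneg,
    ENNReal.ofReal_toReal (measure_ne_top ν1 _), ENNReal.ofReal_toReal (measure_ne_top ν1 _),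
    ofReal_integral_eq_lintegral_ofReal hGint
      (Filter.Eventually.of_forall (fun y => hf_nonneg x y))]

open Classical Finset MeasureTheory ENNReal in
def Bset (n r : ℕ) (c : ℝ) : Set (Fin n → ℝ × ℝ) :=
  {v | ∀ i, orderStat (fun i => (v i).1) r ≤ (v i).1 → c < (v i).2}

open Classical Finset MeasureTheory ENNReal in
lemma measurableSet_Bset {n r : ℕ} (hr : 1 ≤ r) (hrn : r ≤ n) (c : ℝ) :
    MeasurableSet (Bset n r c) := by
  have hO := measurable_orderStat (n := n) hr hrn
  have h2 : ∀ i : Fin n, MeasurableSet {v : Fin n → ℝ × ℝ |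
      orderStat (fun i => (v i).1) r ≤ (v i).1 → c < (v i).2} := by
    intro i
    have ha : MeasurableSet {v : Fin n → ℝ × ℝ | orderStat (fun i => (v i).1) r ≤ (v i).1} :=
      measurableSet_le hO ((measurable_fst).comp (measurable_pi_apply i))
    have hb : MeasurableSet {v : Fin n → ℝ × ℝ | c < (v i).2} :=
      measurableSet_lt measurable_const ((measurable_snd).comp (measurable_pi_apply i))
    have : {v : Fin n → ℝ × ℝ | orderStat (fun i => (v i).1) r ≤ (v i).1 → c < (v i).2}
        = {v : Fin n → ℝ × ℝ | orderStat (fun i => (v i).1) r ≤ (v i).1}ᶜ ∪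
          {v : Fin n → ℝ × ℝ | c < (v i).2} := by
      ext v; simp [imp_iff_not_or]
    rw [this]
    exact ha.compl.union hb
  have : Bset n r c = ⋂ i : Fin n, {v : Fin n → ℝ × ℝ |
      orderStat (fun i => (v i).1) r ≤ (v i).1 → c < (v i).2} := by
    ext v
    simp only [Bset, Set.mem_setOf_eq, Set.mem_iInter]
  rw [this]
  exact MeasurableSet.iInter h2

open Classical Finset MeasureTheory ENNReal in
lemma Bset_measure_eq {m r : ℕ} (hr : 1 ≤ r) (hrm : r ≤ m + 1)
    (ν1 : Measure (ℝ × ℝ)) [IsProbabilityMeasure ν1]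
    (hq0 : ν1 {q : ℝ × ℝ | q.1 ≤ 0} = 0) (c : ℝ) :
    Measure.pi (fun _ : Fin (m + 1) => ν1) (Bset (m + 1) r c)
      = Measure.pi (fun _ : Fin (m + 1) => ν1) (Aset (m + 1) r 0 c) := by
  set ν := Measure.pi (fun _ : Fin (m + 1) => ν1) with hν
  set Z := ⋃ i : Fin (m + 1), {v : Fin (m + 1) → ℝ × ℝ | (v i).1 ≤ 0} with hZdef
  have hsub1 : Aset (m + 1) r 0 c ⊆ Bset (m + 1) r c := fun v hv => hv.2
  have hsub2 : Bset (m + 1) r c ⊆ Aset (m + 1) r 0 c ∪ Z := by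
    intro v hv
    by_cases h0 : 0 < orderStat (fun i => (v i).1) r
    · exact Or.inl ⟨h0, hv⟩
    · obtain ⟨i, hi⟩ := orderStat_exists_eq (fun i => (v i).1) hr hrm
      exact Or.inr (Set.mem_iUnion.mpr ⟨i, by
        simp only [Set.mem_setOf_eq]
        rw [hi]
        exact not_lt.mp h0⟩)
  have hZ : ν Z = 0 := by
    apply measure_iUnion_null
    intro i
    have : {v : Fin (m + 1) → ℝ × ℝ | (v i).1 ≤ 0}
        = (fun v : Fin (m + 1) → ℝ × ℝ => v i) ⁻¹' {q : ℝ × ℝ | q.1 ≤ 0} := rfl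
    rw [hν, this]
    exact Measure.pi_eval_preimage_null _ hq0
  refine le_antisymm ?_ (measure_mono hsub1)
  calc ν (Bset (m + 1) r c) ≤ ν (Aset (m + 1) r 0 c ∪ Z) := measure_mono hsub2
  _ ≤ ν (Aset (m + 1) r 0 c) + ν Z := measure_union_le _ _
  _ = ν (Aset (m + 1) r 0 c) := by rw [hZ, add_zero]

/-- the operational reliability
  P_s(t) = P{X_{r:n} > t | min(W_{[r:n]}(t), ..., W_{[n:n]}(t)) > s} = Q(t,s)/D(s),
where Q(t,s) = P{X_{r:n} > t, W_{[r:n]}(t) > s, ..., W_{[n:n]}(t) > s} (with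
W_{[i:n]}(t) = W_{[i:n]}·φ(t)) and D(s) = P{min(W_{[r:n]}, ..., W_{[n:n]}) > s},
equals the ratio of integrals
  [∫_t^∞ F_X(x)^{r-1}·[P{X>x, W>s/φ(t)}]^{n-r}·(∫_{s/φ(t)}^∞ f(x,y) dy) dx] /
  [∫_0^∞ F_X(x)^{r-1}·[P{X>x, W>s}]^{n-r}·(∫_s^∞ f(x,y) dy) dx],
provided the denominator is positive (the common factor n·C(n-1,r-1) cancels). -/
theorem statement10
    {Ω : Type*} [MeasurableSpace Ω] (μ : Measure Ω) [IsProbabilityMeasure μ]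
    (n r : ℕ) (hr : 1 ≤ r) (hrn : r ≤ n)
    (X W : Fin n → Ω → ℝ)
    (hXmeas : ∀ i, Measurable (X i)) (hWmeas : ∀ i, Measurable (W i))
    (f : ℝ → ℝ → ℝ) (hf_nonneg : ∀ x y, 0 ≤ f x y)
    (hf_meas : Measurable (Function.uncurry f))
    (hindep : iIndepFun (fun i ω => (X i ω, W i ω)) μ)
    (hlaw : ∀ i, Measure.map (fun ω => (X i ω, W i ω)) μ =
      (volume : Measure (ℝ × ℝ)).withDensity (fun p => ENNReal.ofReal (f p.1 p.2)))
    (hX_nonneg : ∀ i, ∀ᵐ ω ∂μ, 0 ≤ X i ω)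
    (φ : ℝ → ℝ) (hφ_cont : ContinuousOn φ (Set.Ici 0))
    (hφ_anti : AntitoneOn φ (Set.Ici 0))
    (hφ_mem : ∀ u ∈ Set.Ici (0 : ℝ), φ u ∈ Set.Ioc (0 : ℝ) 1)
    (hφ0 : φ 0 = 1)
    (t s : ℝ) (ht : 0 ≤ t) (hs : 0 ≤ s)
    -- the denominator is positive
    (hden : 0 < ∫ x in Set.Ioi (0 : ℝ),
        (μ {ω | X ⟨0, by omega⟩ ω < x}).toReal ^ (r - 1) *
        (μ {ω | x < X ⟨0, by omega⟩ ω ∧ s < W ⟨0, by omega⟩ ω}).toReal ^ (n - r) *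
        ∫ y in Set.Ioi s, f x y) :
    (μ {ω | t < orderStat (fun i => X i ω) r ∧
        s < concomMin (fun i => X i ω) (fun i => W i ω * φ t) r}).toReal /
      (μ {ω | s < concomMin (fun i => X i ω) (fun i => W i ω) r}).toReal
      = (∫ x in Set.Ioi t,
          (μ {ω | X ⟨0, by omega⟩ ω < x}).toReal ^ (r - 1) *
          (μ {ω | x < X ⟨0, by omega⟩ ω ∧ s / φ t < W ⟨0, by omega⟩ ω}).toReal ^ (n - r) *
          ∫ y in Set.Ioi (s / φ t), f x y) /
        (∫ x in Set.Ioi (0 : ℝ),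
          (μ {ω | X ⟨0, by omega⟩ ω < x}).toReal ^ (r - 1) *
          (μ {ω | x < X ⟨0, by omega⟩ ω ∧ s < W ⟨0, by omega⟩ ω}).toReal ^ (n - r) *
          ∫ y in Set.Ioi s, f x y) := by
  obtain ⟨m, rfl⟩ : ∃ m, n = m + 1 := ⟨n - 1, by omega⟩
  have hφt : 0 < φ t := (hφ_mem t ht).1
  set ν1 : Measure (ℝ × ℝ) :=
    (volume : Measure (ℝ × ℝ)).withDensity (fun p => ENNReal.ofReal (f p.1 p.2)) with hν1
  have hpairmeas : ∀ i : Fin (m + 1), Measurable (fun ω => (X i ω, W i ω)) :=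
    fun i => (hXmeas i).prodMk (hWmeas i)
  haveI hprob : IsProbabilityMeasure ν1 := by
    rw [← hlaw ⟨0, by omega⟩]
    exact Measure.isProbabilityMeasure_map (hpairmeas _).aemeasurable
  -- the first marginal has no atoms
  have hx0 : ∀ x : ℝ, ν1 {q : ℝ × ℝ | q.1 = x} = 0 := by
    intro x
    rw [hν1]
    refine withDensity_absolutelyContinuous _ _ ?_
    have hst : {q : ℝ × ℝ | q.1 = x} = ({x} : Set ℝ) ×ˢ (Set.univ : Set ℝ) := by
      ext q
      simp only [Set.mem_setOf_eq, Set.mem_prod, Set.mem_singleton_iff, Set.mem_univ, and_true]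
    rw [hst, MeasureTheory.Measure.volume_eq_prod, Measure.prod_prod, Real.volume_singleton,
      zero_mul]
  -- the first marginal gives no mass to (-∞, 0]
  have hq0 : ν1 {q : ℝ × ℝ | q.1 ≤ 0} = 0 := by
    have hlt : ν1 {q : ℝ × ℝ | q.1 < 0} = 0 := by
      rw [← hlaw ⟨0, by omega⟩,
        Measure.map_apply (hpairmeas _) (measurableSet_lt measurable_fst measurable_const)]
      have := hX_nonneg ⟨0, by omega⟩
      rw [ae_iff] at this
      convert this using 2
      ext ω
      simp [not_le]
    refine measure_mono_null (show {q : ℝ × ℝ | q.1 ≤ 0} ⊆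
      {q : ℝ × ℝ | q.1 < 0} ∪ {q : ℝ × ℝ | q.1 = 0} from ?_) ?_
    · intro q hq
      rcases lt_or_eq_of_le (show q.1 ≤ (0:ℝ) from hq) with h | h
      · exact Or.inl h
      · exact Or.inr h
    · exact measure_union_null hlt (hx0 0)
  -- the joint law is the product measure
  set T : Ω → (Fin (m + 1) → ℝ × ℝ) := fun ω i => (X i ω, W i ω) with hTdef
  have hT : Measurable T := measurable_pi_lambda T (fun i => hpairmeas i)
  have hmap : Measure.pi (fun _ : Fin (m + 1) => ν1) = Measure.map T μ := by
    apply Measure.pi_eq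
    intro sets hsets
    rw [Measure.map_apply hT (MeasurableSet.univ_pi hsets)]
    have hpre : T ⁻¹' Set.pi Set.univ sets
        = ⋂ i, (fun ω => (X i ω, W i ω)) ⁻¹' sets i := by
      ext ω
      simp [hTdef, Set.mem_pi]
    have hbig : (⋂ i, (fun ω => (X i ω, W i ω)) ⁻¹' sets i)
        = ⋂ i ∈ (Finset.univ : Finset (Fin (m + 1))), (fun ω => (X i ω, W i ω)) ⁻¹' sets i := by
      simp
    rw [hpre, hbig, hindep.measure_inter_preimage_eq_mul Finset.univ (fun i _ => hsets i)]
    apply Finset.prod_congr rfl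
    intro i _
    rw [← Measure.map_apply (hpairmeas i) (hsets i), hlaw i]
  -- numerator event
  have hnum : μ {ω | t < orderStat (fun i => X i ω) r ∧
      s < concomMin (fun i => X i ω) (fun i => W i ω * φ t) r}
      = Measure.pi (fun _ : Fin (m + 1) => ν1) (Aset (m + 1) r t (s / φ t)) := by
    have hev : {ω | t < orderStat (fun i => X i ω) r ∧
        s < concomMin (fun i => X i ω) (fun i => W i ω * φ t) r}
        = T ⁻¹' Aset (m + 1) r t (s / φ t) := by
      ext ω
      simp only [Set.mem_setOf_eq, Set.mem_preimage, Aset, hTdef]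
      apply and_congr Iff.rfl
      rw [concomMin_lt_iff _ _ hr hrn]
      apply forall_congr'
      intro i
      constructor
      · intro h hle
        exact (div_lt_iff₀ hφt).mpr (h hle)
      · intro h hle
        exact (div_lt_iff₀ hφt).mp (h hle)
    rw [hev, ← Measure.map_apply hT (measurableSet_Aset hr hrn t (s / φ t)), ← hmap]
  -- denominator event
  have hdenev : μ {ω | s < concomMin (fun i => X i ω) (fun i => W i ω) r}
      = Measure.pi (fun _ : Fin (m + 1) => ν1) (Aset (m + 1) r 0 s) := by
    have hev : {ω | s < concomMin (fun i => X i ω) (fun i => W i ω) r}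
        = T ⁻¹' Bset (m + 1) r s := by
      ext ω
      simp only [Set.mem_setOf_eq, Set.mem_preimage, Bset, hTdef]
      rw [concomMin_lt_iff _ _ hr hrn]
    rw [hev, ← Measure.map_apply hT (measurableSet_Bset hr hrn s), ← hmap,
      Bset_measure_eq hr hrn ν1 hq0 s]
  -- evaluate both probabilities via the master formula
  have hg2meas : ∀ c' : ℝ, Measurable (fun x : ℝ => ν1 {q : ℝ × ℝ | q.1 < x} ^ (r - 1) *
      ν1 {q : ℝ × ℝ | x < q.1 ∧ c' < q.2} ^ (m + 1 - r)) := by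
    intro c'
    have hFFmono : Monotone (fun x : ℝ => ν1 {q : ℝ × ℝ | q.1 < x}) :=
      fun x y hxy => measure_mono (fun q hq => lt_of_lt_of_le hq hxy)
    have hGGanti : Antitone (fun x : ℝ => ν1 {q : ℝ × ℝ | x < q.1 ∧ c' < q.2}) :=
      fun x y hxy => measure_mono (fun q hq => ⟨lt_of_le_of_lt hxy hq.1, hq.2⟩)
    exact (hFFmono.measurable.pow_const _).mul (hGGanti.measurable.pow_const _)
  have hnumval : Measure.pi (fun _ : Fin (m + 1) => ν1) (Aset (m + 1) r t (s / φ t))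
      = ((m + 1) * Nat.choose m (r - 1) : ℕ) *
        ∫⁻ x in Set.Ioi t, (ν1 {q : ℝ × ℝ | q.1 < x} ^ (r - 1) *
          ν1 {q : ℝ × ℝ | x < q.1 ∧ s / φ t < q.2} ^ (m + 1 - r)) *
          ∫⁻ y in Set.Ioi (s / φ t), ENNReal.ofReal (f x y) := by
    rw [Aset_measure hr hrn ν1 hx0 t (s / φ t)]
    congr 1
    exact indicator_lintegral_density f hf_nonneg hf_meas t (s / φ t)
      (fun x => ν1 {q : ℝ × ℝ | q.1 < x} ^ (r - 1) *
        ν1 {q : ℝ × ℝ | x < q.1 ∧ s / φ t < q.2} ^ (m + 1 - r)) (hg2meas _)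
  have hdenval : Measure.pi (fun _ : Fin (m + 1) => ν1) (Aset (m + 1) r 0 s)
      = ((m + 1) * Nat.choose m (r - 1) : ℕ) *
        ∫⁻ x in Set.Ioi (0 : ℝ), (ν1 {q : ℝ × ℝ | q.1 < x} ^ (r - 1) *
          ν1 {q : ℝ × ℝ | x < q.1 ∧ s < q.2} ^ (m + 1 - r)) *
          ∫⁻ y in Set.Ioi s, ENNReal.ofReal (f x y) := by
    rw [Aset_measure hr hrn ν1 hx0 0 s]
    congr 1
    exact indicator_lintegral_density f hf_nonneg hf_meas 0 s
      (fun x => ν1 {q : ℝ × ℝ | q.1 < x} ^ (r - 1) *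
        ν1 {q : ℝ × ℝ | x < q.1 ∧ s < q.2} ^ (m + 1 - r)) (hg2meas _)
  -- rewrite the probability sets appearing on the right-hand side
  have hFFeq : ∀ x : ℝ, μ {ω | X ⟨0, by omega⟩ ω < x} = ν1 {q : ℝ × ℝ | q.1 < x} := by
    intro x
    rw [← hlaw ⟨0, by omega⟩,
      Measure.map_apply (hpairmeas _) (measurableSet_lt measurable_fst measurable_const)]
    rfl
  have hGG1 : ∀ x : ℝ, μ {ω | x < X ⟨0, by omega⟩ ω ∧ s / φ t < W ⟨0, by omega⟩ ω}
      = ν1 {q : ℝ × ℝ | x < q.1 ∧ s / φ t < q.2} := by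
    intro x
    rw [← hlaw ⟨0, by omega⟩, Measure.map_apply (hpairmeas ⟨0, by omega⟩)
      (show MeasurableSet {q : ℝ × ℝ | x < q.1 ∧ s / φ t < q.2} from
        (measurableSet_lt measurable_const measurable_fst).inter
          (measurableSet_lt measurable_const measurable_snd))]
    rfl
  have hGG2 : ∀ x : ℝ, μ {ω | x < X ⟨0, by omega⟩ ω ∧ s < W ⟨0, by omega⟩ ω}
      = ν1 {q : ℝ × ℝ | x < q.1 ∧ s < q.2} := by
    intro x
    rw [← hlaw ⟨0, by omega⟩, Measure.map_apply (hpairmeas ⟨0, by omega⟩)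
      (show MeasurableSet {q : ℝ × ℝ | x < q.1 ∧ s < q.2} from
        (measurableSet_lt measurable_const measurable_fst).inter
          (measurableSet_lt measurable_const measurable_snd))]
    rfl
  rw [hnum, hdenev, hnumval, hdenval]
  simp only [hFFeq, hGG1, hGG2]
  rw [bochner_eq_lintegral f hf_nonneg hf_meas ν1 hν1 t (s / φ t) (r - 1) (m + 1 - r),
    bochner_eq_lintegral f hf_nonneg hf_meas ν1 hν1 0 s (r - 1) (m + 1 - r),
    ENNReal.toReal_mul, ENNReal.toReal_mul]
  have hK : (((m + 1) * Nat.choose m (r - 1) : ℕ) : ENNReal).toReal ≠ 0 := by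
    rw [ENNReal.toReal_natCast]
    have h1 : 0 < (m + 1) * Nat.choose m (r - 1) :=
      Nat.mul_pos (Nat.succ_pos m) (Nat.choose_pos (by omega))
    exact_mod_cast Nat.cast_ne_zero.mpr (Nat.pos_iff_ne_zero.mp h1)
  exact mul_div_mul_left _ _ hK
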